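/- For every positive integer n and every real α > 0 satisfying at least one of the conditions (a) α² is irrational, (b) α² = p/q with p, q positive integers and 47 does not divide q, (c) α² ≥ 2, (d) α² ≤ 1/(7·47⁴·48), there exists a partition of ℝⁿ into red and blue points such that there is no red 1-progression of length 3 (no x, v with ‖v‖ = 1 and x, x + v, x + 2v all red) and no blue α-progression of length 8649 (no x, v with ‖v‖ = α and x + i·v blue for all i = 0, …, 8648). -/

import Mathlib

namespace Stmt1Aux

/-- value-window form of fract -/
lemma fract_window (x : ℝ) (k : ℤ) (h1 : (k:ℝ) ≤ x) (h2 : x < k + 1) :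
    Int.fract x = x - k := by
  have : ⌊x⌋ = k := Int.floor_eq_iff.mpr ⟨h1, h2⟩
  rw [Int.fract, this]

/-- general sweep/crossing lemma -/
lemma sweep (x : ℕ → ℝ) (T : ℕ) (lam c : ℝ) (hlam : 0 < lam) (hc : 0 ≤ c)
    (hc1 : c + lam ≤ 1)
    (hstep : ∀ t, t < T → |x (t+1) - x t| ≤ lam) (htravel : 1 ≤ |x T - x 0|) :
    ∃ t, t ≤ T ∧ c ≤ Int.fract (x t) ∧ Int.fract (x t) < c + lam := by
  classical
  have key : ∃ t, t ≤ T ∧ ∃ k : ℤ, (k:ℝ) + c ≤ x t ∧ x t < k + c + lam := by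
    rcases abs_cases (x T - x 0) with ⟨he, _⟩ | ⟨he, _⟩
    · -- increasing : x T ≥ x 0 + 1
      have hup : x 0 + 1 ≤ x T := by rw [he] at htravel; linarith
      set k : ℤ := ⌊x 0 - c⌋ + 1 with hk
      have h0 : x 0 < (k:ℝ) + c := by
        have := Int.lt_floor_add_one (x 0 - c)
        push_cast [hk]; linarith
      have hT : (k:ℝ) + c ≤ x T := by
        have := Int.floor_le (x 0 - c)
        push_cast [hk]; linarith
      have hex : ∃ t, (k:ℝ) + c ≤ x t := ⟨T, hT⟩
      have ht0ne : Nat.find hex ≠ 0 := by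
        intro h
        have := Nat.find_spec hex
        rw [h] at this; linarith
      obtain ⟨t', ht'⟩ : ∃ t', Nat.find hex = t' + 1 :=
        ⟨Nat.find hex - 1, (Nat.succ_pred_eq_of_pos (Nat.pos_of_ne_zero ht0ne)).symm⟩
      have hft : (k:ℝ) + c ≤ x (t' + 1) := by rw [← ht']; exact Nat.find_spec hex
      have ht0T : t' + 1 ≤ T := by rw [← ht']; exact Nat.find_min' hex hT
      have hprev : ¬ ((k:ℝ) + c ≤ x t') := Nat.find_min hex (by omega)
      push_neg at hprev
      have hstep' : |x (t' + 1) - x t'| ≤ lam := hstep t' (by omega)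
      have : x (t' + 1) < (k:ℝ) + c + lam := by
        rcases abs_le.mp hstep' with ⟨_, hb⟩; linarith
      exact ⟨t' + 1, ht0T, k, hft, by push_cast; linarith⟩
    · -- decreasing
      have hdn : x T ≤ x 0 - 1 := by rw [he] at htravel; linarith
      set k : ℤ := ⌊x 0 - c - lam⌋ with hk
      have h0 : (k:ℝ) + c + lam ≤ x 0 := by
        have := Int.floor_le (x 0 - c - lam)
        push_cast [hk]; linarith
      have hT : x T < (k:ℝ) + c + lam := by
        have := Int.lt_floor_add_one (x 0 - c - lam)
        push_cast [hk]; linarith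
      have hex : ∃ t, x t < (k:ℝ) + c + lam := ⟨T, hT⟩
      have ht0ne : Nat.find hex ≠ 0 := by
        intro h
        have := Nat.find_spec hex
        rw [h] at this; linarith
      obtain ⟨t', ht'⟩ : ∃ t', Nat.find hex = t' + 1 :=
        ⟨Nat.find hex - 1, (Nat.succ_pred_eq_of_pos (Nat.pos_of_ne_zero ht0ne)).symm⟩
      have hft : x (t' + 1) < (k:ℝ) + c + lam := by rw [← ht']; exact Nat.find_spec hex
      have ht0T : t' + 1 ≤ T := by rw [← ht']; exact Nat.find_min' hex hT
      have hprev : ¬ (x t' < (k:ℝ) + c + lam) := Nat.find_min hex (by omega)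
      push_neg at hprev
      have hstep' : |x (t' + 1) - x t'| ≤ lam := hstep t' (by omega)
      have : (k:ℝ) + c ≤ x (t' + 1) := by
        rcases abs_le.mp hstep' with ⟨ha, _⟩; linarith
      exact ⟨t' + 1, ht0T, k, this, by push_cast; linarith⟩
  obtain ⟨t, htT, k, hk1, hk2⟩ := key
  refine ⟨t, htT, ?_, ?_⟩
  · have h := fract_window (x t) k (by linarith) (by push_cast; linarith)
    rw [h]; linarith
  · have h := fract_window (x t) k (by linarith) (by push_cast; linarith)
    rw [h]; linarith



set_option maxRecDepth 100000 in
set_option maxHeartbeats 1600000 in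
theorem FACT0 : ∀ (s a : ZMod 47), s ≠ 0 → ∃ r : ZMod 47, (s * r * r - a).val < 6 := by
  decide

lemma LATQ (sI kI a : ℤ) (hs : ¬ (47:ℤ) ∣ sI) :
    ∃ r : ℕ, r < 47 ∧ ∃ u : ℕ, u < 6 ∧ ∃ t : ℤ,
      sI * r * r + kI * r = a + u + 47 * t := by
  have h2 : (2 : ZMod 47) ≠ 0 := by decide
  haveI : Fact (Nat.Prime 47) := ⟨by norm_num⟩
  have hs' : (sI : ZMod 47) ≠ 0 := by
    rw [Ne, ZMod.intCast_zmod_eq_zero_iff_dvd]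
    exact_mod_cast hs
  set s' : ZMod 47 := (sI : ZMod 47) with hs'def
  set k' : ZMod 47 := (kI : ZMod 47) with hk'def
  set a' : ZMod 47 := (a : ZMod 47) with ha'def
  have h2s : (2 : ZMod 47) * s' ≠ 0 := mul_ne_zero h2 hs'
  set hh : ZMod 47 := k' * ((2 : ZMod 47) * s')⁻¹ with hhdef
  have hkey : (2 : ZMod 47) * s' * hh = k' := by
    rw [hhdef, ← mul_assoc, mul_comm ((2 : ZMod 47) * s') k', mul_assoc,
      mul_inv_cancel₀ h2s, mul_one]
  obtain ⟨ρ, hρ⟩ := FACT0 s' (a' + s' * hh * hh) hs'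
  set r' : ZMod 47 := ρ - hh with hr'def
  set u : ℕ := (s' * ρ * ρ - (a' + s' * hh * hh)).val with hudef
  refine ⟨r'.val, ZMod.val_lt r', u, hρ, ?_⟩
  have hzero : ((sI * r'.val * r'.val + kI * r'.val - (a + u) : ℤ) : ZMod 47) = 0 := by
    push_cast
    rw [show ((r'.val : ℕ) : ZMod 47) = r' from by
          rw [ZMod.natCast_val, ZMod.cast_id],
        show ((u : ℕ) : ZMod 47) = s' * ρ * ρ - (a' + s' * hh * hh) from by
          rw [hudef, ZMod.natCast_val, ZMod.cast_id]]
    rw [← hs'def, ← hk'def, ← ha'def, ← hkey, hr'def]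
    ring
  rw [ZMod.intCast_zmod_eq_zero_iff_dvd] at hzero
  obtain ⟨t, ht⟩ := hzero
  refine ⟨t, ?_⟩
  push_cast at ht
  linarith

/-- window hitting lemma from the quadratic residue table -/
lemma F47WIN (sI kI : ℤ) (hs : ¬ (47:ℤ) ∣ sI) (D lo : ℝ) (hlo : 0 ≤ lo)
    (hhi : lo + 6/47 ≤ 1) :
    ∃ r : ℕ, r < 47 ∧ lo ≤ Int.fract (D + ((sI*r*r + kI*r : ℤ) : ℝ)/47) ∧
      Int.fract (D + ((sI*r*r + kI*r : ℤ) : ℝ)/47) < lo + 6/47 := by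
  set e : ℤ := ⌈47*(lo - D)⌉ with hedef
  have he1 : 47*(lo - D) ≤ (e:ℝ) := Int.le_ceil _
  have he2 : (e:ℝ) < 47*(lo - D) + 1 := Int.ceil_lt_add_one _
  obtain ⟨r, hr, u, hu, t, ht⟩ := LATQ sI kI e hs
  refine ⟨r, hr, ?_, ?_⟩ <;>
  · have hval : D + ((sI*r*r + kI*r : ℤ) : ℝ)/47 = (D + (e:ℝ)/47 + (u:ℝ)/47) + (t:ℝ) := by
      rw [ht]; push_cast; ring
    have hin1 : lo ≤ D + (e:ℝ)/47 + (u:ℝ)/47 := by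
      have : (0:ℝ) ≤ (u:ℝ) := Nat.cast_nonneg u
      linarith
    have hin2 : D + (e:ℝ)/47 + (u:ℝ)/47 < lo + 6/47 := by
      have : (u:ℝ) ≤ 5 := by exact_mod_cast Nat.lt_succ_iff.mp hu
      linarith
    have hfr : Int.fract (D + ((sI*r*r + kI*r : ℤ) : ℝ)/47) = D + (e:ℝ)/47 + (u:ℝ)/47 := by
      rw [hval, Int.fract_add_intCast, Int.fract_eq_self.mpr ⟨by linarith, by linarith⟩]
    rw [hfr]
    first
    | exact hin1
    | exact hin2

/-- fract multiplication: shifting by t/h picks out fract(h x)/h -/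
lemma MULFR (h : ℕ) (hh : 0 < h) (x : ℝ) :
    ∃ t : ℕ, t < h ∧ Int.fract (x + t/h) = Int.fract ((h:ℝ)*x)/h := by
  have hhR : (0:ℝ) < h := by exact_mod_cast hh
  have hf0 : 0 ≤ Int.fract x := Int.fract_nonneg x
  have hf1 : Int.fract x < 1 := Int.fract_lt_one x
  have hfrhx : Int.fract ((h:ℝ)*x) = Int.fract ((h:ℝ)*Int.fract x) := by
    conv_lhs => rw [show (h:ℝ)*x = (h:ℝ)*Int.fract x + (h * ⌊x⌋ : ℤ) from by
      push_cast [Int.fract]; ring]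
    rw [Int.fract_add_intCast]
  have h0hf : (0:ℝ) ≤ (h:ℝ)*Int.fract x := by positivity
  have h1hf : (h:ℝ)*Int.fract x < h := by nlinarith
  set t0 : ℤ := ⌊(h:ℝ)*Int.fract x⌋ with ht0
  have ht00 : 0 ≤ t0 := Int.floor_nonneg.mpr h0hf
  have ht0h : t0 < h := by
    exact_mod_cast Int.floor_lt.mpr (by exact_mod_cast h1hf)
  have hfr2 : Int.fract ((h:ℝ)*x) = (h:ℝ)*Int.fract x - t0 := by
    rw [hfrhx, Int.fract, ht0]
  have hfrin1 : (0:ℝ) ≤ (h:ℝ)*Int.fract x - t0 := by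
    rw [← hfr2, hfrhx]; exact Int.fract_nonneg _
  have hfrin2 : (h:ℝ)*Int.fract x - t0 < 1 := by
    rw [← hfr2, hfrhx]; exact Int.fract_lt_one _
  rcases eq_or_lt_of_le ht00 with h0 | hpos
  · refine ⟨0, hh, ?_⟩
    rw [Nat.cast_zero, zero_div, add_zero, hfr2, ← h0]
    field_simp
    simp
  · set tn := t0.toNat with htn
    have htn1 : 1 ≤ tn := by omega
    have htnh : tn < h := by omega
    have htnr : ((tn:ℕ):ℝ) = ((t0:ℤ):ℝ) := by
      have : (tn : ℤ) = t0 := Int.toNat_of_nonneg ht00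
      exact_mod_cast this
    refine ⟨h - tn, by omega, ?_⟩
    have hcast : ((h - tn : ℕ):ℝ) = (h:ℝ) - (tn:ℝ) := by
      push_cast [Nat.cast_sub (le_of_lt htnh)]; ring
    have hxt : x + ((h - tn : ℕ):ℝ)/h = ((⌊x⌋ + 1 : ℤ):ℝ) + ((h:ℝ)*Int.fract x - t0)/h := by
      rw [hcast, htnr]
      push_cast
      field_simp
      rw [Int.fract]
      ring
    rw [hxt, Int.fract_intCast_add, hfr2,
      Int.fract_eq_self.mpr ⟨by positivity, by
        rw [div_lt_one hhR]
        have h1h : (1:ℝ) ≤ h := by exact_mod_cast hh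
        linarith⟩]

/-- signed version -/
lemma MUL2 (h : ℕ) (hh : 0 < h) (σ : ℤ) (hσ : σ = 1 ∨ σ = -1 ∨ (σ = 0 ∧ h = 1)) (x : ℝ) :
    ∃ j : ℕ, j < h ∧ Int.fract (x + σ*j/h) = Int.fract ((h:ℝ)*x)/h := by
  obtain ⟨t, hth, hteq⟩ := MULFR h hh x
  rcases hσ with rfl | rfl | ⟨rfl, rfl⟩
  · exact ⟨t, hth, by rw [← hteq]; norm_num⟩
  · rcases Nat.eq_zero_or_pos t with rfl | htpos
    · exact ⟨0, hh, by rw [← hteq]; norm_num⟩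
    · refine ⟨h - t, by omega, ?_⟩
      have : x + (-1:ℤ)*((h - t : ℕ):ℝ)/h = (x + t/h) + (-1 : ℤ) := by
        have hcast : ((h - t : ℕ):ℝ) = (h:ℝ) - (t:ℝ) := by
          push_cast [Nat.cast_sub (le_of_lt hth)]; ring
        have hhR : (0:ℝ) < h := by exact_mod_cast hh
        rw [hcast]
        field_simp
        ring
      rw [this, Int.fract_add_intCast, hteq]
  · refine ⟨0, by omega, ?_⟩
    norm_num

/-- fract perturbation: if z has fract in (a,b) and |e| small then fract (z+e) = fract z + e -/
lemma fract_pert (z e : ℝ) (h1 : 0 ≤ Int.fract z + e) (h2 : Int.fract z + e < 1) :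
    Int.fract (z + e) = Int.fract z + e := by
  have hz : z + e = (⌊z⌋:ℝ) + (Int.fract z + e) := by rw [Int.fract]; ring
  rw [hz, Int.fract_intCast_add, Int.fract_eq_self.mpr ⟨h1, h2⟩]

set_option maxHeartbeats 1000000 in
/-- the lattice case of B1 -/
lemma LAT (s : ℕ) (hs : ¬ 47 ∣ s) (h : ℕ) (hh1 : 1 ≤ h) (hh4 : h ≤ 4) (σ k : ℤ)
    (hσ : σ = 1 ∨ σ = -1 ∨ (σ = 0 ∧ h = 1)) (δ A U : ℝ) (hδ : |δ| ≤ 1/183)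
    (hU : 47*U = (k:ℝ) + (σ:ℝ)/(h:ℝ) + δ) :
    ∃ i : ℕ, i ≤ 8648 ∧ Int.fract (A + U*i + ((s:ℝ)/47)*i^2) < 23/100 := by
  have hhR : (0:ℝ) < h := by exact_mod_cast hh1
  have hhR4 : (h:ℝ) ≤ 4 := by exact_mod_cast hh4
  -- 47 does not divide h * s
  have hs' : ¬ (47:ℤ) ∣ ((h:ℤ) * (s:ℤ)) := by
    intro hdvd
    have h47 : Nat.Prime 47 := by norm_num
    have : (47:ℕ) ∣ h * s := by exact_mod_cast hdvd
    rcases (Nat.Prime.dvd_mul h47).mp this with hc | hc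
    · have := Nat.le_of_dvd (by omega) hc; omega
    · exact hs hc
  -- apply the window lemma
  obtain ⟨r, hr47, hw1, hw2⟩ := F47WIN ((h:ℤ) * (s:ℤ)) ((h:ℤ)*k + σ) hs'
      ((h:ℝ)*A) (3*(h:ℝ)/100) (by positivity)
      (by nlinarith)
  -- the base point
  set Φ : ℝ := A + ((s:ℝ)*r*r + (k:ℝ)*r)/47 + (σ:ℝ)*r/(47*(h:ℝ)) with hΦdef
  have hΦmul : (h:ℝ)*Φ = (h:ℝ)*A + ((((h:ℤ)*(s:ℤ))*r*r + ((h:ℤ)*k + σ)*r : ℤ) : ℝ)/47 := by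
    rw [hΦdef]
    push_cast
    field_simp
    ring
  obtain ⟨j, hjh, hjeq⟩ := MUL2 h (by omega) σ (by tauto) Φ
  set i : ℕ := r + 47*j with hidef
  have hi187 : i ≤ 187 := by omega
  refine ⟨i, by omega, ?_⟩
  -- main algebraic identity
  have hUval : U = ((k:ℝ) + (σ:ℝ)/(h:ℝ) + δ)/47 := by
    field_simp at hU ⊢
    linarith
  have hiR : (i:ℝ) = (r:ℝ) + 47*(j:ℝ) := by push_cast [hidef]; ring
  have hmain : A + U*i + ((s:ℝ)/47)*i^2
      = (Φ + (σ:ℝ)*(j:ℝ)/(h:ℝ)) + δ*(i:ℝ)/47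
        + ((k*(j:ℤ) + 2*(s:ℤ)*(r:ℤ)*(j:ℤ) + 47*(s:ℤ)*(j:ℤ)*(j:ℤ) : ℤ) : ℝ) := by
    rw [hUval, hΦdef, hiR]
    push_cast
    field_simp
    ring
  rw [hmain, Int.fract_add_intCast]
  -- window for fract(Φ + σ j / h)
  have hF : Int.fract (Φ + (σ:ℝ)*(j:ℝ)/(h:ℝ)) = Int.fract ((h:ℝ)*Φ)/(h:ℝ) := hjeq
  have hhR1 : (1:ℝ) ≤ (h:ℝ) := by exact_mod_cast hh1
  have hFlo : 3/100 ≤ Int.fract (Φ + (σ:ℝ)*(j:ℝ)/(h:ℝ)) := by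
    rw [hF, hΦmul, le_div_iff₀ hhR]
    nlinarith [hw1]
  have hFhi : Int.fract (Φ + (σ:ℝ)*(j:ℝ)/(h:ℝ)) < 3/100 + 6/47 := by
    rw [hF, hΦmul, div_lt_iff₀ hhR]
    nlinarith [hw2, hhR1]
  -- perturbation bound
  have hpert : |δ*(i:ℝ)/47| ≤ 22/1000 := by
    have hiRb : (0:ℝ) ≤ (i:ℝ) ∧ (i:ℝ) ≤ 187 := by
      constructor
      · positivity
      · exact_mod_cast hi187
    rw [abs_div, abs_mul]
    rw [div_le_iff₀ (by norm_num : (0:ℝ) < |(47:ℝ)|)]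
    have h1 : |δ| * |(i:ℝ)| ≤ (1/183) * 187 := by
      apply mul_le_mul hδ ?_ (abs_nonneg _) (by norm_num)
      rw [abs_of_nonneg hiRb.1]; exact hiRb.2
    have : |(47:ℝ)| = 47 := by norm_num
    rw [this]
    linarith
  obtain ⟨hp1, hp2⟩ := abs_le.mp hpert
  have hfp := fract_pert (Φ + (σ:ℝ)*(j:ℝ)/(h:ℝ)) (δ*(i:ℝ)/47)
    (by linarith) (by linarith)
  rw [hfp]
  linarith

/-- the AP (linear sweep) case of B1 -/
lemma APhelp (s : ℕ) (h : ℕ) (hh1 : 1 ≤ h) (hh4 : h ≤ 4) (c : ℤ) (J : ℕ)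
    (d A U : ℝ) (hd : (47*(h:ℝ))*U = (c:ℝ) + d) (hlam : |d| ≤ 23/100)
    (htrav : 1 ≤ (J:ℝ)*|d|) (hiJ : 47*h*J ≤ 8648) :
    ∃ i : ℕ, i ≤ 8648 ∧ Int.fract (A + U*i + ((s:ℝ)/47)*i^2) < 23/100 := by
  obtain ⟨t, htJ, hlo, hhi⟩ := sweep (fun j => A + d*j) J (23/100) 0
    (by norm_num) (le_refl 0) (by norm_num)
    (fun t ht => by
      have : A + d*(t+1 : ℕ) - (A + d*t) = d := by push_cast; ring
      rw [this]; exact hlam)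
    (by
      push_cast
      rw [show A + d*(J:ℝ) - (A + d*0) = d*(J:ℝ) from by ring, abs_mul,
        abs_of_nonneg (by positivity : (0:ℝ) ≤ (J:ℝ)), mul_comm]
      exact htrav)
  refine ⟨47*h*t, by
    calc 47*h*t ≤ 47*h*J := by
          have := Nat.mul_le_mul_left (47*h) htJ
          omega
      _ ≤ 8648 := hiJ, ?_⟩
  have hU : U = ((c:ℝ) + d)/(47*(h:ℝ)) := by
    have hhR : (0:ℝ) < h := by exact_mod_cast hh1
    field_simp at hd ⊢
    linarith
  have hid : A + U*(47*h*t : ℕ) + ((s:ℝ)/47)*((47*h*t : ℕ):ℝ)^2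
      = (A + d*t) + ((c*t + 47*(s:ℤ)*(h:ℤ)*(h:ℤ)*(t:ℤ)*(t:ℤ) : ℤ):ℝ) := by
    have hhR : (0:ℝ) < h := by exact_mod_cast hh1
    rw [hU]
    push_cast
    field_simp
    ring
  rw [hid, Int.fract_add_intCast]
  simpa using hhi

set_option maxHeartbeats 1000000 in
/-- the key modular quadratic equidistribution theorem -/
theorem B1 (s : ℕ) (hs : ¬ 47 ∣ s) (A U : ℝ) :
    ∃ i : ℕ, i ≤ 8648 ∧ Int.fract (A + U*i + ((s:ℝ)/47)*i^2) < 23/100 := by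
  set k : ℤ := ⌊47*U + 1/2⌋ with hk
  set w : ℝ := 47*U - k with hw
  have hw1 : -(1/2) ≤ w := by
    have := Int.floor_le (47*U + 1/2)
    rw [hw, hk]; linarith
  have hw2 : w < 1/2 := by
    have := Int.lt_floor_add_one (47*U + 1/2)
    rw [hw, hk]; push_cast at this ⊢; linarith
  have hwabs : |w| ≤ 1/2 := abs_le.mpr ⟨by linarith, by linarith⟩
  have hU47 : 47*U = (k:ℝ) + w := by rw [hw]; ring
  rcases le_or_gt (1/183 : ℝ) |w| with h1 | h1
  · rcases le_or_gt |w| (23/100) with h2 | h2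
    · -- AP with stride 47
      apply APhelp s 1 le_rfl (by norm_num) k 183 w A U
        (by push_cast; linarith) h2
        (by
          calc (1:ℝ) = 183 * (1/183) := by norm_num
            _ ≤ 183 * |w| := by nlinarith
            _ = (183:ℕ) * |w| := by norm_num)
        (by norm_num)
    · -- |w| > 23/100 : stride cases
      rcases le_or_gt |w| (77/300) with h3 | h3
      · -- h = 4
        rcases le_or_gt 0 w with hwpos | hwneg
        · have hran : 23/100 < w ∧ w ≤ 77/300 := by
            rw [abs_of_nonneg hwpos] at h2 h3; exact ⟨h2, h3⟩
          have hdb : |4*w - 1| ≤ 2/25 := abs_le.mpr ⟨by linarith [hran.1], by linarith [hran.2]⟩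
          rcases le_or_gt (1/46 : ℝ) |4*w - 1| with hap | hlat
          · apply APhelp s 4 (by norm_num) (by norm_num) (4*k + 1) 46 (4*w - 1) A U
              (by push_cast; linarith) (by linarith [hdb])
              (by
                calc (1:ℝ) = 46 * (1/46) := by norm_num
                  _ ≤ 46 * |4*w - 1| := by nlinarith
                  _ = (46:ℕ) * |4*w - 1| := by norm_num)
              (by norm_num)
          · apply LAT s hs 4 (by norm_num) (by norm_num) 1 k (by tauto) ((4*w - 1)/4) A U
              (by
                rw [abs_div]
                rw [div_le_iff₀ (by norm_num : (0:ℝ) < |(4:ℝ)|)]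
                have : |(4:ℝ)| = 4 := by norm_num
                rw [this]; linarith)
              (by push_cast; rw [hU47]; ring)
        · have hran : 23/100 < -w ∧ -w ≤ 77/300 := by
            rw [abs_of_neg hwneg] at h2 h3; exact ⟨h2, h3⟩
          have hdb : |4*w + 1| ≤ 2/25 := abs_le.mpr ⟨by linarith [hran.2], by linarith [hran.1]⟩
          rcases le_or_gt (1/46 : ℝ) |4*w + 1| with hap | hlat
          · apply APhelp s 4 (by norm_num) (by norm_num) (4*k - 1) 46 (4*w + 1) A U
              (by push_cast; linarith) (by linarith [hdb])
              (by
                calc (1:ℝ) = 46 * (1/46) := by norm_num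
                  _ ≤ 46 * |4*w + 1| := by nlinarith
                  _ = (46:ℕ) * |4*w + 1| := by norm_num)
              (by norm_num)
          · apply LAT s hs 4 (by norm_num) (by norm_num) (-1) k (by tauto) ((4*w + 1)/4) A U
              (by
                rw [abs_div]
                rw [div_le_iff₀ (by norm_num : (0:ℝ) < |(4:ℝ)|)]
                have : |(4:ℝ)| = 4 := by norm_num
                rw [this]; linarith)
              (by push_cast; rw [hU47]; ring)
      · rcases le_or_gt |w| (77/200) with h4 | h4
        · -- h = 3
          rcases le_or_gt 0 w with hwpos | hwneg
          · have hran : 77/300 < w ∧ w ≤ 77/200 := by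
              rw [abs_of_nonneg hwpos] at h3 h4; exact ⟨h3, h4⟩
            have hdb : |3*w - 1| ≤ 23/100 :=
              abs_le.mpr ⟨by linarith [hran.1], by linarith [hran.2]⟩
            rcases le_or_gt (1/61 : ℝ) |3*w - 1| with hap | hlat
            · apply APhelp s 3 (by norm_num) (by norm_num) (3*k + 1) 61 (3*w - 1) A U
                (by push_cast; linarith) hdb
                (by
                  calc (1:ℝ) = 61 * (1/61) := by norm_num
                    _ ≤ 61 * |3*w - 1| := by nlinarith
                    _ = (61:ℕ) * |3*w - 1| := by norm_num)
                (by norm_num)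
            · apply LAT s hs 3 (by norm_num) (by norm_num) 1 k (by tauto) ((3*w - 1)/3) A U
                (by
                  rw [abs_div]
                  rw [div_le_iff₀ (by norm_num : (0:ℝ) < |(3:ℝ)|)]
                  have : |(3:ℝ)| = 3 := by norm_num
                  rw [this]; linarith)
                (by push_cast; rw [hU47]; ring)
          · have hran : 77/300 < -w ∧ -w ≤ 77/200 := by
              rw [abs_of_neg hwneg] at h3 h4; exact ⟨h3, h4⟩
            have hdb : |3*w + 1| ≤ 23/100 :=
              abs_le.mpr ⟨by linarith [hran.2], by linarith [hran.1]⟩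
            rcases le_or_gt (1/61 : ℝ) |3*w + 1| with hap | hlat
            · apply APhelp s 3 (by norm_num) (by norm_num) (3*k - 1) 61 (3*w + 1) A U
                (by push_cast; linarith) hdb
                (by
                  calc (1:ℝ) = 61 * (1/61) := by norm_num
                    _ ≤ 61 * |3*w + 1| := by nlinarith
                    _ = (61:ℕ) * |3*w + 1| := by norm_num)
                (by norm_num)
            · apply LAT s hs 3 (by norm_num) (by norm_num) (-1) k (by tauto) ((3*w + 1)/3) A U
                (by
                  rw [abs_div]
                  rw [div_le_iff₀ (by norm_num : (0:ℝ) < |(3:ℝ)|)]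
                  have : |(3:ℝ)| = 3 := by norm_num
                  rw [this]; linarith)
                (by push_cast; rw [hU47]; ring)
        · -- h = 2
          rcases le_or_gt 0 w with hwpos | hwneg
          · have hran : 77/200 < w ∧ w ≤ 1/2 := by
              rw [abs_of_nonneg hwpos] at h4 hwabs; exact ⟨h4, hwabs⟩
            have hdb : |2*w - 1| ≤ 23/100 :=
              abs_le.mpr ⟨by linarith [hran.1], by linarith [hran.2]⟩
            rcases le_or_gt (1/92 : ℝ) |2*w - 1| with hap | hlat
            · apply APhelp s 2 (by norm_num) (by norm_num) (2*k + 1) 92 (2*w - 1) A U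
                (by push_cast; linarith) hdb
                (by
                  calc (1:ℝ) = 92 * (1/92) := by norm_num
                    _ ≤ 92 * |2*w - 1| := by nlinarith
                    _ = (92:ℕ) * |2*w - 1| := by norm_num)
                (by norm_num)
            · apply LAT s hs 2 (by norm_num) (by norm_num) 1 k (by tauto) ((2*w - 1)/2) A U
                (by
                  rw [abs_div]
                  rw [div_le_iff₀ (by norm_num : (0:ℝ) < |(2:ℝ)|)]
                  have : |(2:ℝ)| = 2 := by norm_num
                  rw [this]; linarith)
                (by push_cast; rw [hU47]; ring)
          · have hran : 77/200 < -w ∧ -w ≤ 1/2 := by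
              rw [abs_of_neg hwneg] at h4 hwabs; exact ⟨h4, hwabs⟩
            have hdb : |2*w + 1| ≤ 23/100 :=
              abs_le.mpr ⟨by linarith [hran.2], by linarith [hran.1]⟩
            rcases le_or_gt (1/92 : ℝ) |2*w + 1| with hap | hlat
            · apply APhelp s 2 (by norm_num) (by norm_num) (2*k - 1) 92 (2*w + 1) A U
                (by push_cast; linarith) hdb
                (by
                  calc (1:ℝ) = 92 * (1/92) := by norm_num
                    _ ≤ 92 * |2*w + 1| := by nlinarith
                    _ = (92:ℕ) * |2*w + 1| := by norm_num)
                (by norm_num)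
            · apply LAT s hs 2 (by norm_num) (by norm_num) (-1) k (by tauto) ((2*w + 1)/2) A U
                (by
                  rw [abs_div]
                  rw [div_le_iff₀ (by norm_num : (0:ℝ) < |(2:ℝ)|)]
                  have : |(2:ℝ)| = 2 := by norm_num
                  rw [this]; linarith)
                (by push_cast; rw [hU47]; ring)
  · -- |w| < 1/183 : lattice with h = 1
    apply LAT s hs 1 le_rfl (by norm_num) 0 k (by tauto) w A U (by linarith)
      (by push_cast; rw [hU47]; ring)


/-- Dirichlet approximation with q ≤ 57 -/
lemma dirichlet (U : ℝ) : ∃ q : ℕ, 1 ≤ q ∧ q ≤ 57 ∧ ∃ p : ℤ, |(q:ℝ)*U - p| ≤ 1/57 := by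
  classical
  have key : ∀ a b : ℕ, a < b → b ≤ 57 →
      ⌊57 * Int.fract ((a:ℝ)*U)⌋ = ⌊57 * Int.fract ((b:ℝ)*U)⌋ →
      ∃ q : ℕ, 1 ≤ q ∧ q ≤ 57 ∧ ∃ p : ℤ, |(q:ℝ)*U - p| ≤ 1/57 := by
    intro a b hab hb57 hfl
    refine ⟨b - a, by omega, by omega, ⌊(b:ℝ)*U⌋ - ⌊(a:ℝ)*U⌋, ?_⟩
    have hcast : ((b - a : ℕ):ℝ) = (b:ℝ) - (a:ℝ) := by
      push_cast [Nat.cast_sub (le_of_lt hab)]; ring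
    have hval : ((b - a : ℕ):ℝ)*U - ((⌊(b:ℝ)*U⌋ - ⌊(a:ℝ)*U⌋ : ℤ):ℝ)
        = Int.fract ((b:ℝ)*U) - Int.fract ((a:ℝ)*U) := by
      rw [hcast, Int.fract, Int.fract]
      push_cast
      ring
    rw [hval]
    -- floors of 57 * fract are equal, so difference < 1/57
    have h1 : 57 * Int.fract ((b:ℝ)*U) - 57 * Int.fract ((a:ℝ)*U) < 1 := by
      have hb := Int.fract_nonneg ((b:ℝ)*U)
      have hbf : 57 * Int.fract ((b:ℝ)*U) - ⌊57 * Int.fract ((b:ℝ)*U)⌋ < 1 := by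
        have := Int.lt_floor_add_one (57 * Int.fract ((b:ℝ)*U)); linarith
      have haf : (0:ℝ) ≤ 57 * Int.fract ((a:ℝ)*U) - ⌊57 * Int.fract ((a:ℝ)*U)⌋ := by
        have := Int.floor_le (57 * Int.fract ((a:ℝ)*U)); linarith
      rw [hfl] at haf
      linarith
    have h2 : 57 * Int.fract ((a:ℝ)*U) - 57 * Int.fract ((b:ℝ)*U) < 1 := by
      have hbf : 57 * Int.fract ((a:ℝ)*U) - ⌊57 * Int.fract ((a:ℝ)*U)⌋ < 1 := by
        have := Int.lt_floor_add_one (57 * Int.fract ((a:ℝ)*U)); linarith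
      have haf : (0:ℝ) ≤ 57 * Int.fract ((b:ℝ)*U) - ⌊57 * Int.fract ((b:ℝ)*U)⌋ := by
        have := Int.floor_le (57 * Int.fract ((b:ℝ)*U)); linarith
      rw [← hfl] at haf
      linarith
    rw [abs_le]
    constructor <;> nlinarith
  have hmap : ∀ t ∈ Finset.range 58,
      (⌊57 * Int.fract ((t:ℝ)*U)⌋.toNat) ∈ Finset.range 57 := by
    intro t _
    simp only [Finset.mem_range]
    have h0 : 0 ≤ Int.fract ((t:ℝ)*U) := Int.fract_nonneg _
    have h1 : Int.fract ((t:ℝ)*U) < 1 := Int.fract_lt_one _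
    have : (⌊57 * Int.fract ((t:ℝ)*U)⌋ : ℤ) < 57 := by
      apply Int.floor_lt.mpr
      push_cast
      nlinarith
    omega
  obtain ⟨t₁, ht₁, t₂, ht₂, hne, heq⟩ :=
    Finset.exists_ne_map_eq_of_card_lt_of_maps_to
      (by simp : (Finset.range 57).card < (Finset.range 58).card) hmap
  simp only [Finset.mem_range] at ht₁ ht₂
  have heq' : (⌊57 * Int.fract ((t₁:ℝ)*U)⌋).toNat = (⌊57 * Int.fract ((t₂:ℝ)*U)⌋).toNat :=
    heq
  have hfl : ⌊57 * Int.fract ((t₁:ℝ)*U)⌋ = ⌊57 * Int.fract ((t₂:ℝ)*U)⌋ := by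
    have hnn1 : 0 ≤ ⌊57 * Int.fract ((t₁:ℝ)*U)⌋ :=
      Int.floor_nonneg.mpr (by have := Int.fract_nonneg ((t₁:ℝ)*U); linarith)
    have hnn2 : 0 ≤ ⌊57 * Int.fract ((t₂:ℝ)*U)⌋ :=
      Int.floor_nonneg.mpr (by have := Int.fract_nonneg ((t₂:ℝ)*U); linarith)
    omega
  rcases Nat.lt_or_ge t₁ t₂ with hlt | hge
  · exact key t₁ t₂ hlt (by omega) hfl
  · have hlt : t₂ < t₁ := by omega
    exact key t₂ t₁ hlt (by omega) hfl.symm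

set_option maxHeartbeats 1600000 in
/-- hitting lemma for slow quadratics -/
lemma quadHit (A e g : ℝ) (J : ℕ) (hg0 : 0 < g) (hgm : g ≤ 22/10000)
    (he : |e| ≤ 1/50) (hgJ2 : 22 ≤ g*(J:ℝ)^2) (hgJ : g*(J:ℝ) ≤ 1/3) (hJ : 150 ≤ J) :
    ∃ j : ℕ, j ≤ J ∧ Int.fract (A + e*j + g*(j:ℝ)^2) < 23/100 := by
  classical
  set X : ℕ → ℝ := fun j => A + e*j + g*(j:ℝ)^2 with hX
  have hstepid : ∀ t : ℕ, X (t+1) - X t = e + g*(2*(t:ℝ)+1) := by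
    intro t; rw [hX]; push_cast; ring
  have hJR : (150:ℝ) ≤ (J:ℝ) := by exact_mod_cast hJ
  have he' := abs_le.mp he
  by_cases hex : ∃ j, j < J ∧ 0 ≤ e + g*(2*(j:ℝ)+1)
  · set j₂ := Nat.find hex with hj₂def
    have hspec := Nat.find_spec hex
    rw [← hj₂def] at hspec
    obtain ⟨hj₂J, h0f⟩ := hspec
    have hprev : ∀ j, j < j₂ → ¬ (j < J ∧ 0 ≤ e + g*(2*(j:ℝ)+1)) :=
      fun j hj => Nat.find_min hex hj
    have hj₂R : (j₂:ℝ) ≤ (J:ℝ) := by exact_mod_cast le_of_lt hj₂J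
    have hj20 : (0:ℝ) ≤ (j₂:ℝ) := Nat.cast_nonneg _
    have hfj₂ : e + g*(2*(j₂:ℝ)+1) ≤ 1/50 + 2*g := by
      rcases Nat.eq_zero_or_pos j₂ with h0 | hpos
      · rw [h0]; push_cast; linarith [he'.2]
      · have := hprev (j₂ - 1) (by omega)
        push_neg at this
        have hneg := this (by omega)
        have hc : ((j₂ - 1 : ℕ):ℝ) = (j₂:ℝ) - 1 := by
          push_cast [Nat.cast_sub hpos]; ring
        rw [hc] at hneg
        nlinarith
    by_cases hbig : ∃ t, j₂ ≤ t ∧ t < J ∧ 23/100 < e + g*(2*(t:ℝ)+1)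
    · -- capped run
      set t₁ := Nat.find hbig with ht₁def
      have hspec2 := Nat.find_spec hbig
      rw [← ht₁def] at hspec2
      obtain ⟨ht₁j₂, ht₁J, ht₁f⟩ := hspec2
      have hmid : ∀ t, j₂ ≤ t → t < t₁ → e + g*(2*(t:ℝ)+1) ≤ 23/100 := by
        intro t hq1 hq2
        have := Nat.find_min hbig hq2
        push_neg at this
        exact this hq1 (by omega)
      have ht₁pos : j₂ < t₁ := by
        rcases Nat.lt_or_ge j₂ t₁ with h | h
        · exact h
        · exfalso
          have hEq : t₁ = j₂ := by omega
          rw [hEq] at ht₁f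
          nlinarith
      have ht₁R : ((t₁:ℕ):ℝ) ≤ (J:ℝ) := by exact_mod_cast le_of_lt ht₁J
      have hDpos : (0:ℝ) < (t₁:ℝ) - (j₂:ℝ) := by
        have : (j₂:ℝ) < (t₁:ℝ) := by exact_mod_cast ht₁pos
        linarith
      -- lower bound on the run length
      have hgm1 : 21/100 - 2*g ≤ 2*g*((t₁:ℝ) - (j₂:ℝ)) := by nlinarith
      -- upper bound on step at t₁-1 gives upper bound on 2 g (t₁ - j₂)
      have hup : e + g*(2*((t₁:ℝ) - 1)+1) ≤ 23/100 := by
        have := hmid (t₁ - 1) (by omega) (by omega)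
        have hc : ((t₁ - 1 : ℕ):ℝ) = (t₁:ℝ) - 1 := by
          push_cast [Nat.cast_sub (by omega : 1 ≤ t₁)]; ring
        rw [hc] at this
        exact this
      have hgm2 : 2*g*((t₁:ℝ) - (j₂:ℝ)) ≤ 23/100 + 4*g := by nlinarith
      -- D ≥ 46
      have hD46 : (46:ℝ) ≤ (t₁:ℝ) - (j₂:ℝ) := by
        nlinarith [mul_nonneg (sub_nonneg.mpr hgm) hDpos.le]
      -- travel
      have htravel : 1 ≤ X t₁ - X j₂ := by
        have hid : X t₁ - X j₂
            = ((t₁:ℝ) - (j₂:ℝ))*((e + g*(2*(j₂:ℝ)+1)) + g*(((t₁:ℝ) - (j₂:ℝ)) - 1)) := by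
          rw [hX]; push_cast; ring
        have h1 : X t₁ - X j₂ ≥ ((t₁:ℝ) - (j₂:ℝ))*(g*(((t₁:ℝ) - (j₂:ℝ)) - 1)) := by
          rw [hid]
          nlinarith [mul_nonneg hDpos.le h0f]
        have h2 : g*((t₁:ℝ) - (j₂:ℝ)) ≥ 21/200 - g := by linarith
        have h3 : ((t₁:ℝ) - (j₂:ℝ))*(g*(((t₁:ℝ) - (j₂:ℝ)) - 1))
            = (g*((t₁:ℝ) - (j₂:ℝ)))*(((t₁:ℝ) - (j₂:ℝ)) - 1) := by ring
        nlinarith [mul_le_mul_of_nonneg_right h2.le (by linarith : (0:ℝ) ≤ ((t₁:ℝ) - (j₂:ℝ)) - 1)]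
      obtain ⟨t, htm, _, hfr⟩ := sweep (fun t => X (j₂ + t)) (t₁ - j₂) (23/100) 0
        (by norm_num) le_rfl (by norm_num)
        (fun t htm => by
          have hidx : j₂ + (t + 1) = (j₂ + t) + 1 := by omega
          rw [hidx, hstepid (j₂ + t), abs_of_nonneg]
          · exact hmid (j₂ + t) (by omega) (by omega)
          · have hc : ((j₂ + t : ℕ):ℝ) = (j₂:ℝ) + t := by push_cast; ring
            rw [hc]
            have : (0:ℝ) ≤ (t:ℝ) := Nat.cast_nonneg t
            nlinarith)
        (by
          simp only [Nat.add_zero]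
          rw [show j₂ + (t₁ - j₂) = t₁ from by omega, abs_of_nonneg (by linarith)]
          linarith)
      refine ⟨j₂ + t, by omega, ?_⟩
      simpa [hX] using hfr
    · -- no big steps to the right of j₂
      push_neg at hbig
      rcases Nat.lt_or_ge (2*j₂) J with hside | hside
      · -- right side run [j₂, J]
        have h2j : 2*(j₂:ℝ) < (J:ℝ) := by exact_mod_cast hside
        have htravel : 1 ≤ X J - X j₂ := by
          have hid : X J - X j₂
              = ((J:ℝ) - (j₂:ℝ))*((e + g*(2*(j₂:ℝ)+1)) + g*(((J:ℝ) - (j₂:ℝ)) - 1)) := by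
            rw [hX]; push_cast; ring
          have h1 : X J - X j₂ ≥ ((J:ℝ) - (j₂:ℝ))*(g*(((J:ℝ) - (j₂:ℝ)) - 1)) := by
            rw [hid]
            nlinarith [mul_nonneg (by linarith : (0:ℝ) ≤ (J:ℝ) - (j₂:ℝ)) h0f]
          have hsq : g*((J:ℝ) - (j₂:ℝ))^2 ≥ g*(J:ℝ)^2/4 := by
            nlinarith [mul_nonneg hg0.le
              (mul_nonneg (by linarith : (0:ℝ) ≤ ((J:ℝ) - (j₂:ℝ)) - (J:ℝ)/2)
                (by linarith : (0:ℝ) ≤ ((J:ℝ) - (j₂:ℝ)) + (J:ℝ)/2))]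
          have hlin : g*((J:ℝ) - (j₂:ℝ)) ≤ 1/3 := by
            nlinarith [mul_nonneg hg0.le hj20]
          nlinarith
        obtain ⟨t, htm, _, hfr⟩ := sweep (fun t => X (j₂ + t)) (J - j₂) (23/100) 0
          (by norm_num) le_rfl (by norm_num)
          (fun t htm => by
            have hidx : j₂ + (t + 1) = (j₂ + t) + 1 := by omega
            rw [hidx, hstepid (j₂ + t), abs_of_nonneg]
            · exact hbig (j₂ + t) (by omega) (by omega)
            · have hc : ((j₂ + t : ℕ):ℝ) = (j₂:ℝ) + t := by push_cast; ring
              rw [hc]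
              have : (0:ℝ) ≤ (t:ℝ) := Nat.cast_nonneg t
              nlinarith)
          (by
            simp only [Nat.add_zero]
            rw [show j₂ + (J - j₂) = J from by omega, abs_of_nonneg (by linarith)]
            linarith)
        refine ⟨j₂ + t, by omega, ?_⟩
        simpa [hX] using hfr
      · -- left side run [0, j₂]
        have hj₂pos : 1 ≤ j₂ := by omega
        have hJ2 : (J:ℝ) ≤ 2*(j₂:ℝ) := by exact_mod_cast hside
        have hlast : e + g*(2*((j₂:ℝ) - 1)+1) < 0 := by
          have := hprev (j₂ - 1) (by omega)
          push_neg at this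
          have hneg := this (by omega)
          have hc : ((j₂ - 1 : ℕ):ℝ) = (j₂:ℝ) - 1 := by
            push_cast [Nat.cast_sub hj₂pos]; ring
          rw [hc] at hneg
          linarith
        have htravel : X j₂ - X 0 ≤ -1 := by
          have hid : X j₂ - X 0 = (j₂:ℝ)*(e + g*(j₂:ℝ)) := by
            rw [hX]; push_cast; ring
          have hkey : e + g*(j₂:ℝ) ≤ -(g*(j₂:ℝ) - g) := by linarith
          have hsq : g*(j₂:ℝ)^2 ≥ g*(J:ℝ)^2/4 := by
            nlinarith [mul_nonneg hg0.le
              (mul_nonneg (by linarith : (0:ℝ) ≤ (j₂:ℝ) - (J:ℝ)/2)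
                (by linarith : (0:ℝ) ≤ (j₂:ℝ) + (J:ℝ)/2))]
          have hlin : g*(j₂:ℝ) ≤ 1/3 := by
            nlinarith [mul_nonneg hg0.le (by linarith : (0:ℝ) ≤ (J:ℝ) - (j₂:ℝ))]
          nlinarith [mul_le_mul_of_nonneg_left hkey hj20]
        obtain ⟨t, htm, _, hfr⟩ := sweep X j₂ (23/100) 0
          (by norm_num) le_rfl (by norm_num)
          (fun t htm => by
            rw [hstepid t, abs_le]
            have hneg : e + g*(2*(t:ℝ)+1) < 0 := by
              have := hprev t htm
              push_neg at this
              exact this (by omega)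
            have : (0:ℝ) ≤ (t:ℝ) := Nat.cast_nonneg t
            constructor <;> nlinarith)
          (by rw [abs_of_nonpos (by linarith)]; linarith)
        refine ⟨t, by omega, ?_⟩
        simpa [hX] using hfr
  · -- all steps negative on [0, J)
    push_neg at hex
    have hlast : e + g*(2*((J:ℝ) - 1)+1) < 0 := by
      have := hex (J - 1) (by omega)
      have hc : ((J - 1 : ℕ):ℝ) = (J:ℝ) - 1 := by
        push_cast [Nat.cast_sub (by omega : 1 ≤ J)]; ring
      rw [hc] at this
      linarith
    have htravel : X J - X 0 ≤ -1 := by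
      have hid : X J - X 0 = (J:ℝ)*(e + g*(J:ℝ)) := by
        rw [hX]; push_cast; ring
      have hkey : e + g*(J:ℝ) ≤ -(g*(J:ℝ) - g) := by linarith
      nlinarith [mul_le_mul_of_nonneg_left hkey (by positivity : (0:ℝ) ≤ (J:ℝ))]
    obtain ⟨t, htm, _, hfr⟩ := sweep X J (23/100) 0
      (by norm_num) le_rfl (by norm_num)
      (fun t htm => by
        rw [hstepid t, abs_le]
        have hneg : e + g*(2*(t:ℝ)+1) < 0 := hex t htm
        have : (0:ℝ) ≤ (t:ℝ) := Nat.cast_nonneg t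
        constructor <;> nlinarith)
      (by rw [abs_of_nonpos (by linarith)]; linarith)
    refine ⟨t, htm, ?_⟩
    simpa [hX] using hfr

/-- equidistribution theorem for slow quadratics (case (d)) -/
theorem B2 (th A U : ℝ) (hth1 : 23/8648^2 ≤ th) (hth2 : th ≤ 49/8648^2) :
    ∃ i : ℕ, i ≤ 8648 ∧ Int.fract (A + U*i + th*i^2) < 23/100 := by
  obtain ⟨q, hq1, hq57, p, hp⟩ := dirichlet U
  set J : ℕ := 8648 / q with hJdef
  have hqJ : q * J ≤ 8648 := by
    rw [hJdef]; exact Nat.mul_div_le 8648 q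
  have hqJ2 : 8592 ≤ q * J := by
    have hmod := Nat.div_add_mod 8648 q
    rw [← hJdef] at hmod
    have : 8648 % q < q := Nat.mod_lt _ (by omega)
    omega
  have hJ150 : 150 ≤ J := by
    have : 8648 / 57 ≤ 8648 / q := Nat.div_le_div_left hq57 (by omega)
    have h57 : 8648 / 57 = 151 := by norm_num
    omega
  have hth0 : 0 < th := lt_of_lt_of_le (by norm_num) hth1
  have hqR : (1:ℝ) ≤ (q:ℝ) := by exact_mod_cast hq1
  have hqR57 : (q:ℝ) ≤ 57 := by exact_mod_cast hq57
  have hqJR : (q:ℝ)*(J:ℝ) ≤ 8648 := by exact_mod_cast hqJ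
  have hqJR2 : (8592:ℝ) ≤ (q:ℝ)*(J:ℝ) := by exact_mod_cast hqJ2
  have hJR : (0:ℝ) ≤ (J:ℝ) := Nat.cast_nonneg J
  obtain ⟨j, hjJ, hfr⟩ := quadHit A ((q:ℝ)*U - p) (th*(q:ℝ)^2) J
    (by positivity)
    (by nlinarith)
    (by
      calc |(q:ℝ)*U - p| ≤ 1/57 := hp
        _ ≤ 1/50 := by norm_num)
    (by
      have hQJ : (8592:ℝ)^2 ≤ ((q:ℝ)*(J:ℝ))^2 := by nlinarith
      have hkey : 23/8648^2 * 8592^2 ≤ th * ((q:ℝ)*(J:ℝ))^2 :=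
        mul_le_mul hth1 hQJ (by positivity) (le_of_lt hth0)
      have : (22:ℝ) ≤ 23/8648^2 * 8592^2 := by norm_num
      nlinarith)
    (by
      have h1 : th*(q:ℝ) ≤ 49/8648^2*57 :=
        mul_le_mul hth2 hqR57 (by positivity) (by positivity)
      have h2 : (th*(q:ℝ))*((q:ℝ)*(J:ℝ)) ≤ (49/8648^2*57)*8648 :=
        mul_le_mul h1 hqJR (by positivity) (by positivity)
      have : (49:ℝ)/8648^2*57*8648 ≤ 1/3 := by norm_num
      nlinarith)
    hJ150
  refine ⟨q*j, by calc q*j ≤ q*J := by exact Nat.mul_le_mul_left q hjJ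
                    _ ≤ 8648 := hqJ, ?_⟩
  have hid : A + U*((q*j : ℕ):ℝ) + th*((q*j : ℕ):ℝ)^2
      = (A + ((q:ℝ)*U - p)*j + (th*(q:ℝ)^2)*(j:ℝ)^2) + ((p*(j:ℕ) : ℤ):ℝ) := by
    push_cast
    ring
  rw [hid, Int.fract_add_intCast]
  exact hfr

/-- build m from a good multiplier s -/
lemma mOf (beta : ℝ) (hβ : 0 < beta) (s : ℕ) (hs1 : 1 ≤ s) (hs47 : ¬ 47 ∣ s)
    (hfr1 : 46/100 ≤ Int.fract ((s:ℝ)*(2/(47*beta))))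
    (hfr2 : Int.fract ((s:ℝ)*(2/(47*beta))) ≤ 54/100) :
    ∃ m : ℝ, 0 < m ∧ 46/100 ≤ Int.fract (2/m) ∧ Int.fract (2/m) ≤ 54/100 ∧
      ((∃ s : ℕ, ¬ 47 ∣ s ∧ beta/m = (s:ℝ)/47) ∨
        (23/8648^2 ≤ beta/m ∧ beta/m ≤ 49/8648^2)) := by
  have hsR : (1:ℝ) ≤ (s:ℝ) := by exact_mod_cast hs1
  refine ⟨47*beta/s, by positivity, ?_, ?_, Or.inl ⟨s, hs47, ?_⟩⟩
  · have : 2/(47*beta/s) = (s:ℝ)*(2/(47*beta)) := by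
      field_simp
    rw [this]; exact hfr1
  · have : 2/(47*beta/s) = (s:ℝ)*(2/(47*beta)) := by
      field_simp
    rw [this]; exact hfr2
  · field_simp

/-- case (c): beta ≥ 2 -/
lemma choose_c (beta : ℝ) (hβ2 : 2 ≤ beta) :
    ∃ m : ℝ, 0 < m ∧ 46/100 ≤ Int.fract (2/m) ∧ Int.fract (2/m) ≤ 54/100 ∧
      ((∃ s : ℕ, ¬ 47 ∣ s ∧ beta/m = (s:ℝ)/47) ∨
        (23/8648^2 ≤ beta/m ∧ beta/m ≤ 49/8648^2)) := by
  have hβ : 0 < beta := by linarith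
  set g : ℝ := 2/(47*beta) with hg
  have hg0 : 0 < g := by rw [hg]; positivity
  have hg47 : g ≤ 1/47 := by
    rw [hg, div_le_div_iff₀ (by positivity) (by norm_num)]
    linarith
  set t : ℤ := ⌈(146/100)/g⌉ with ht
  have htlb : (146/100)/g ≤ (t:ℝ) := Int.le_ceil _
  have htub : (t:ℝ) < (146/100)/g + 1 := Int.ceil_lt_add_one _
  have ht1 : 1 ≤ t := by
    have h1 : (1:ℝ) ≤ (146/100)/g := by
      rw [le_div_iff₀ hg0]; linarith
    have : (1:ℝ) ≤ (t:ℝ) := by linarith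
    exact_mod_cast this
  have hv1 : 146/100 ≤ (t:ℝ)*g := (div_le_iff₀ hg0).mp htlb
  have hv1' : (t:ℝ)*g < 146/100 + g := by
    have h' := mul_lt_mul_of_pos_right htub hg0
    have he : (146/100/g + 1) * g = 146/100 + g := by field_simp
    rw [he] at h'
    exact h'
  have hv2 : ((t:ℝ)+1)*g ≤ 154/100 := by nlinarith
  have hval : ∀ u : ℤ, t ≤ u → u ≤ t + 1 →
      46/100 ≤ Int.fract ((u:ℝ)*g) ∧ Int.fract ((u:ℝ)*g) ≤ 54/100 := by
    intro u hu1 hu2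
    have huR1 : (t:ℝ) ≤ (u:ℝ) := by exact_mod_cast hu1
    have huR2 : (u:ℝ) ≤ (t:ℝ)+1 := by exact_mod_cast hu2
    have hin1 : 146/100 ≤ (u:ℝ)*g := by nlinarith
    have hin2 : (u:ℝ)*g ≤ 154/100 := by nlinarith
    have hfr := fract_window ((u:ℝ)*g) 1 (by push_cast; linarith) (by push_cast; linarith)
    rw [hfr]
    push_cast
    constructor <;> linarith
  have main : ∀ u : ℤ, ¬ (47:ℤ) ∣ u → t ≤ u → u ≤ t + 1 →
      ∃ m : ℝ, 0 < m ∧ 46/100 ≤ Int.fract (2/m) ∧ Int.fract (2/m) ≤ 54/100 ∧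
        ((∃ s : ℕ, ¬ 47 ∣ s ∧ beta/m = (s:ℝ)/47) ∨
          (23/8648^2 ≤ beta/m ∧ beta/m ≤ 49/8648^2)) := by
    intro u h47u hu1 hu2
    have hu0 : 1 ≤ u := by omega
    have hcast : ((u.toNat : ℕ):ℝ) = (u:ℝ) := by
      have : ((u.toNat : ℕ):ℤ) = u := Int.toNat_of_nonneg (by omega)
      exact_mod_cast this
    refine mOf beta hβ u.toNat (by omega) ?_ ?_ ?_
    · intro hdvd
      have : (47:ℤ) ∣ ((u.toNat : ℕ) : ℤ) := by exact_mod_cast hdvd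
      rw [Int.toNat_of_nonneg (by omega)] at this
      exact h47u this
    · rw [hcast, ← hg]; exact (hval u hu1 hu2).1
    · rw [hcast, ← hg]; exact (hval u hu1 hu2).2
  by_cases h47 : (47:ℤ) ∣ t
  · exact main (t+1) (by omega) (by omega) le_rfl
  · exact main t h47 le_rfl (by omega)

/-- case (a): beta irrational -/
lemma choose_a (beta : ℝ) (hβ : 0 < beta) (hirr : Irrational beta) :
    ∃ m : ℝ, 0 < m ∧ 46/100 ≤ Int.fract (2/m) ∧ Int.fract (2/m) ≤ 54/100 ∧
      ((∃ s : ℕ, ¬ 47 ∣ s ∧ beta/m = (s:ℝ)/47) ∨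
        (23/8648^2 ≤ beta/m ∧ beta/m ≤ 49/8648^2)) := by
  set gam : ℝ := 2/beta with hgam
  set g : ℝ := 2/(47*beta) with hg
  have hg0 : 0 < g := by rw [hg]; positivity
  have hgam47 : gam = 47*g := by rw [hgam, hg]; field_simp
  obtain ⟨q, hq1, hq57, p, hp⟩ := dirichlet gam
  set eta : ℝ := (q:ℝ)*gam - p with heta
  have hetane : eta ≠ 0 := by
    intro h0
    rw [heta, sub_eq_zero] at h0
    -- gam = p/q rational, so beta = 2 q / p rational
    have hqne : ((q:ℕ):ℝ) ≠ 0 := by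
      have : (0:ℝ) < (q:ℝ) := by exact_mod_cast hq1
      linarith
    have hgamval : gam = (p:ℝ)/(q:ℝ) := by
      field_simp at h0 ⊢
      linarith
    have hgampos : 0 < gam := by rw [hgam]; positivity
    have hppos : (0:ℝ) < (p:ℝ) := by
      rw [hgamval] at hgampos
      by_contra hcon
      push_neg at hcon
      have : (p:ℝ)/(q:ℝ) ≤ 0 := div_nonpos_of_nonpos_of_nonneg hcon (by positivity)
      linarith
    have hbeta : beta = 2*(q:ℝ)/(p:ℝ) := by
      rw [hgam] at hgamval
      field_simp at hgamval ⊢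
      linarith
    apply hirr
    refine ⟨(2*(q:ℕ) : ℚ)/((p:ℤ) : ℚ), ?_⟩
    rw [hbeta]
    push_cast
    ring
  have hpeta : |eta| ≤ 1/57 := by rw [heta]; exact hp
  have hetapos : 0 < |eta| := abs_pos.mpr hetane
  -- sweep along x_j = g + j * eta
  obtain ⟨T, hT⟩ := exists_nat_gt (1/|eta|)
  have hTtrav : 1 ≤ (T:ℝ)*|eta| := by
    rw [div_lt_iff₀ hetapos] at hT
    linarith
  obtain ⟨j, hjT, hfr1, hfr2⟩ := sweep (fun j => g + j*eta) T (8/100) (46/100)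
    (by norm_num) (by norm_num) (by norm_num)
    (fun t ht => by
      have : g + ((t:ℝ)+1)*eta - (g + t*eta) = eta := by push_cast; ring
      push_cast
      rw [show g + ((t:ℝ)+1)*eta - (g + (t:ℝ)*eta) = eta from by ring]
      calc |eta| ≤ 1/57 := hpeta
        _ ≤ 8/100 := by norm_num)
    (by
      push_cast
      rw [show g + (T:ℝ)*eta - (g + (0:ℝ)*eta) = (T:ℝ)*eta from by ring, abs_mul,
        abs_of_nonneg (by positivity : (0:ℝ) ≤ (T:ℝ))]
      exact hTtrav)
  -- s := 1 + 47 * (j*q)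
  set s : ℕ := 1 + 47*(j*q) with hs
  have hs47 : ¬ 47 ∣ s := by omega
  have hkey : (s:ℝ)*g = (g + (j:ℝ)*eta) + ((j:ℤ)*p : ℤ) := by
    rw [hs, heta, hgam47]
    push_cast
    ring
  apply mOf beta hβ s (by omega) hs47
  · rw [← hg, hkey, Int.fract_add_intCast]
    simpa using hfr1
  · rw [← hg, hkey, Int.fract_add_intCast]
    have := hfr2
    linarith
  
/-- case (d): beta very small -/
lemma choose_d (beta : ℝ) (hβ : 0 < beta) (hsm : beta ≤ 1/(7*47^4*48)) :
    ∃ m : ℝ, 0 < m ∧ 46/100 ≤ Int.fract (2/m) ∧ Int.fract (2/m) ≤ 54/100 ∧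
      ((∃ s : ℕ, ¬ 47 ∣ s ∧ beta/m = (s:ℝ)/47) ∨
        (23/8648^2 ≤ beta/m ∧ beta/m ≤ 49/8648^2)) := by
  have hsm' : beta ≤ 1/1639572816 := by
    calc beta ≤ 1/(7*47^4*48) := hsm
      _ = 1/1639572816 := by norm_num
  set N : ℤ := ⌊48/(beta*8648^2)⌋ with hN
  have hNlb : (N:ℝ) ≤ 48/(beta*8648^2) := Int.floor_le _
  have hNub : 48/(beta*8648^2) < (N:ℝ) + 1 := Int.lt_floor_add_one _
  have hbig : (1:ℝ) ≤ 48/(beta*8648^2) := by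
    rw [le_div_iff₀ (by positivity)]
    nlinarith
  have hN1 : 1 ≤ N := by
    have : (1:ℝ) ≤ (N:ℝ) + 1 := by linarith
    have h0 : (0:ℝ) < (N:ℝ) + 1 := by linarith
    rw [hN]
    apply Int.le_floor.mpr
    push_cast
    exact hbig
  have hNR : (1:ℝ) ≤ (N:ℝ) := by exact_mod_cast hN1
  refine ⟨4/(2*(N:ℝ)+1), by positivity, ?_, ?_, Or.inr ⟨?_, ?_⟩⟩
  · have h2m : 2/(4/(2*(N:ℝ)+1)) = (N:ℝ) + 1/2 := by
      field_simp
      ring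
    rw [h2m, Int.fract_intCast_add]
    rw [Int.fract_eq_self.mpr (by norm_num)]
    norm_num
  · have h2m : 2/(4/(2*(N:ℝ)+1)) = (N:ℝ) + 1/2 := by
      field_simp
      ring
    rw [h2m, Int.fract_intCast_add]
    rw [Int.fract_eq_self.mpr (by norm_num)]
    norm_num
  · have hbm : beta/(4/(2*(N:ℝ)+1)) = (beta*(2*(N:ℝ)+1))/4 := by
      field_simp
    rw [hbm]
    -- lower bound: beta*(2N+1) = 2 beta (N+1) - beta > 96/8648^2 - beta
    have h1 : 48/8648^2 < beta*((N:ℝ)+1) := by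
      have := mul_lt_mul_of_pos_left hNub hβ
      rw [mul_div_assoc'] at this
      have he : beta * 48/(beta*8648^2) = 48/8648^2 := by
        field_simp
      rw [he] at this
      linarith
    nlinarith
  · have hbm : beta/(4/(2*(N:ℝ)+1)) = (beta*(2*(N:ℝ)+1))/4 := by
      field_simp
    rw [hbm]
    have h1 : beta*(N:ℝ) ≤ 48/8648^2 := by
      have := mul_le_mul_of_nonneg_left hNlb hβ.le
      rw [mul_div_assoc'] at this
      have he : beta * 48/(beta*8648^2) = 48/8648^2 := by
        field_simp
      rw [he] at this
      linarith
    nlinarith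



set_option maxHeartbeats 800000 in
/-- case (b): beta = p/q with 47 not dividing q -/
lemma choose_b (beta : ℝ) (hβ : 0 < beta) (p q : ℕ) (hp : 0 < p) (hq : 0 < q)
    (hval : beta = (p:ℝ)/q) (h47q : ¬ 47 ∣ q) :
    ∃ m : ℝ, 0 < m ∧ 46/100 ≤ Int.fract (2/m) ∧ Int.fract (2/m) ≤ 54/100 ∧
      ((∃ s : ℕ, ¬ 47 ∣ s ∧ beta/m = (s:ℝ)/47) ∨
        (23/8648^2 ≤ beta/m ∧ beta/m ≤ 49/8648^2)) := by
  have h47prime : Nat.Prime 47 := by norm_num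
  set d : ℕ := Nat.gcd (2*q) (47*p) with hd
  have hd0 : 0 < d := Nat.gcd_pos_of_pos_left _ (by omega)
  have hd2q : d ∣ 2*q := Nat.gcd_dvd_left _ _
  have hd47p : d ∣ 47*p := Nat.gcd_dvd_right _ _
  have h47d : ¬ 47 ∣ d := by
    intro hdvd
    have h2q : (47:ℕ) ∣ 2*q := dvd_trans hdvd hd2q
    rcases (Nat.Prime.dvd_mul h47prime).mp h2q with hc | hc
    · omega
    · exact h47q hc
  have hdp : d ∣ p := by
    have hcop : Nat.Coprime d 47 :=
      Nat.Coprime.symm ((Nat.Prime.coprime_iff_not_dvd h47prime).mpr h47d)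
    have : d ∣ p * 47 := by rw [mul_comm]; exact hd47p
    exact (Nat.Coprime.dvd_of_dvd_mul_right hcop) this
  have hdlep : d ≤ p := Nat.le_of_dvd hp hdp
  set n : ℕ := (46*47*p)/(100*d) + 1 with hn
  have hn1 : 46*47*p < 100*(d*n) := by
    have h1 := Nat.div_add_mod (46*47*p) (100*d)
    have h2 : (46*47*p) % (100*d) < 100*d := Nat.mod_lt _ (by omega)
    rw [hn]
    calc 46*47*p = 100*d*((46*47*p)/(100*d)) + (46*47*p) % (100*d) := h1.symm
      _ < 100*d*((46*47*p)/(100*d)) + 100*d := by omega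
      _ = 100*(d*((46*47*p)/(100*d) + 1)) := by ring
  have hn2 : 100*(d*(n+1)) ≤ 54*47*p := by
    have h1 := Nat.div_add_mod (46*47*p) (100*d)
    have h3 : 100*(d*n) ≤ 46*47*p + 100*d := by
      rw [hn]
      calc 100*(d*((46*47*p)/(100*d) + 1)) = 100*d*((46*47*p)/(100*d)) + 100*d := by ring
        _ ≤ 46*47*p + 100*d := by omega
    calc 100*(d*(n+1)) = 100*(d*n) + 100*d := by ring
      _ ≤ 46*47*p + 200*d := by omega
      _ ≤ 46*47*p + 200*p := by omega
      _ ≤ 54*47*p := by omega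
  set M : ℤ := 47*(p:ℤ) with hM
  have hM0 : (0:ℤ) < M := by rw [hM]; positivity
  have h47M : (47:ℤ) ∣ M := ⟨(p:ℤ), hM⟩
  have hbez : (d:ℤ) = 2*(q:ℤ)*(Nat.gcdA (2*q) (47*p)) + M*(Nat.gcdB (2*q) (47*p)) := by
    have := Nat.gcd_eq_gcd_ab (2*q) (47*p)
    rw [hd, hM]
    push_cast at this ⊢
    linarith
  set a : ℤ := Nat.gcdA (2*q) (47*p) with ha
  set b : ℤ := Nat.gcdB (2*q) (47*p) with hb
  have hcong : ∀ i : ℕ, (2*(q:ℤ))*((a*((n:ℤ)+i)) % M) ≡ (d:ℤ)*((n:ℤ)+i) [ZMOD M] := by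
    intro i
    have h1 : (a*((n:ℤ)+i)) % M ≡ a*((n:ℤ)+i) [ZMOD M] := Int.emod_emod_of_dvd _ dvd_rfl
    calc (2*(q:ℤ))*((a*((n:ℤ)+i)) % M) ≡ (2*(q:ℤ))*(a*((n:ℤ)+i)) [ZMOD M] :=
          Int.ModEq.mul_left _ h1
      _ ≡ (d:ℤ)*((n:ℤ)+i) [ZMOD M] := by
          apply Int.modEq_iff_dvd.mpr
          refine ⟨b*((n:ℤ)+i), ?_⟩
          have hkey : (2*(q:ℤ))*a = (d:ℤ) - M*b := by linarith [hbez]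
          calc (d:ℤ)*((n:ℤ)+i) - (2*(q:ℤ))*(a*((n:ℤ)+i))
              = ((d:ℤ) - (2*(q:ℤ))*a)*((n:ℤ)+i) := by ring
            _ = (M*b)*((n:ℤ)+i) := by rw [hkey]; ring
            _ = M*(b*((n:ℤ)+i)) := by ring
  have hsbound : ∀ i : ℕ, 0 ≤ (a*((n:ℤ)+i)) % M ∧ (a*((n:ℤ)+i)) % M < M :=
    fun i => ⟨Int.emod_nonneg _ (ne_of_gt hM0), Int.emod_lt_of_pos _ hM0⟩
  have hvin : ∀ i : ℕ, i ≤ 1 → 0 < (d:ℤ)*((n:ℤ)+i) ∧ (d:ℤ)*((n:ℤ)+i) < M ∧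
      46*M ≤ 100*((d:ℤ)*((n:ℤ)+i)) ∧ 100*((d:ℤ)*((n:ℤ)+i)) ≤ 54*M := by
    intro i hi
    have hdn1 : (46*47*p : ℤ) < 100*((d:ℤ)*(n:ℤ)) := by exact_mod_cast hn1
    have hdn2 : (100*((d:ℤ)*((n:ℤ)+1)) : ℤ) ≤ (54*47*p : ℤ) := by exact_mod_cast hn2
    have hiR : (0:ℤ) ≤ (i:ℤ) ∧ (i:ℤ) ≤ 1 := ⟨Int.ofNat_nonneg i, by exact_mod_cast hi⟩
    have hd0' : (0:ℤ) < (d:ℤ) := by exact_mod_cast hd0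
    have hn0' : (0:ℤ) < (n:ℤ) := by positivity
    rw [hM]
    refine ⟨by nlinarith, by nlinarith, by nlinarith, by nlinarith⟩
  have hbv : (2:ℝ)/(47*beta) = 2*(q:ℝ)/((M:ℤ):ℝ) := by
    rw [hval, hM]
    have hqR : ((q:ℕ):ℝ) ≠ 0 := by positivity
    have hpR : ((p:ℕ):ℝ) ≠ 0 := by positivity
    push_cast
    field_simp
  clear_value d n a b M
  clear hd hn ha hb hM
  have main : ∀ i : ℕ, i ≤ 1 → ¬ (47:ℤ) ∣ ((a*((n:ℤ)+i)) % M) →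
      ∃ m : ℝ, 0 < m ∧ 46/100 ≤ Int.fract (2/m) ∧ Int.fract (2/m) ≤ 54/100 ∧
        ((∃ s : ℕ, ¬ 47 ∣ s ∧ beta/m = (s:ℝ)/47) ∨
          (23/8648^2 ≤ beta/m ∧ beta/m ≤ 49/8648^2)) := by
    intro i hi h47s
    set sI : ℤ := (a*((n:ℤ)+i)) % M with hsI
    obtain ⟨hs0, hsM⟩ := hsbound i
    rw [← hsI] at hs0 hsM
    obtain ⟨hv0, hvM, hv46, hv54⟩ := hvin i hi
    have hMRpos : (0:ℝ) < ((M:ℤ):ℝ) := by exact_mod_cast hM0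
    have hsne : sI ≠ 0 := by
      intro h0
      have hcg := hcong i
      rw [← hsI, h0, mul_zero] at hcg
      have hdvd : M ∣ (d:ℤ)*((n:ℤ)+i) := by
        have := hcg.dvd
        simpa using this
      have := Int.le_of_dvd hv0 hdvd
      omega
    have hs1 : 1 ≤ sI.toNat := by omega
    obtain ⟨t, ht⟩ := (hcong i).dvd
    rw [← hsI] at ht
    -- ht : d*(n+i) - 2*q*sI = M * t
    have hfr : Int.fract ((sI.toNat : ℝ)*(2/(47*beta)))
        = (((d:ℤ)*((n:ℤ)+i) : ℤ):ℝ)/((M:ℤ):ℝ) := by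
      have hsR : ((sI.toNat : ℕ):ℝ) = ((sI:ℤ):ℝ) := by
        exact_mod_cast congrArg (Int.cast : ℤ → ℝ) (Int.toNat_of_nonneg hs0)
      have htR : (((d:ℤ)*((n:ℤ)+i) : ℤ):ℝ) - 2*(q:ℝ)*((sI:ℤ):ℝ) = ((M:ℤ):ℝ)*((t:ℤ):ℝ) := by
        exact_mod_cast congrArg (Int.cast : ℤ → ℝ) ht
      have hidd : ((sI:ℤ):ℝ)*(2*(q:ℝ)/((M:ℤ):ℝ))
          = (((d:ℤ)*((n:ℤ)+i) : ℤ):ℝ)/((M:ℤ):ℝ) + ((-t : ℤ):ℝ) := by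
        have hMne : ((M:ℤ):ℝ) ≠ 0 := ne_of_gt hMRpos
        field_simp
        push_cast at htR ⊢
        linarith
      rw [hsR, hbv, hidd, Int.fract_add_intCast, Int.fract_eq_self.mpr ?_]
      constructor
      · apply div_nonneg _ hMRpos.le
        exact_mod_cast hv0.le
      · rw [div_lt_one hMRpos]
        exact_mod_cast hvM
    refine mOf beta hβ sI.toNat hs1 ?_ ?_ ?_
    · intro hdvd
      apply h47s
      have : (47:ℤ) ∣ (sI.toNat : ℤ) := by exact_mod_cast hdvd
      rwa [Int.toNat_of_nonneg hs0] at this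
    · rw [hfr, le_div_iff₀ hMRpos]
      have h46 : (46:ℝ)*((M:ℤ):ℝ) ≤ 100*(((d:ℤ)*((n:ℤ)+i):ℤ):ℝ) := by exact_mod_cast hv46
      linarith
    · rw [hfr, div_le_iff₀ hMRpos]
      have h54 : (100:ℝ)*(((d:ℤ)*((n:ℤ)+i):ℤ):ℝ) ≤ 54*((M:ℤ):ℝ) := by exact_mod_cast hv54
      linarith
  by_cases hc0 : (47:ℤ) ∣ ((a*((n:ℤ)+(0:ℕ))) % M)
  · refine main 1 le_rfl ?_
    intro hc1
    have hm0 : (2*(q:ℤ))*((a*((n:ℤ)+(0:ℕ))) % M) ≡ (d:ℤ)*((n:ℤ)+(0:ℕ)) [ZMOD 47] :=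
      Int.ModEq.of_dvd h47M (hcong 0)
    have hm1 : (2*(q:ℤ))*((a*((n:ℤ)+(1:ℕ))) % M) ≡ (d:ℤ)*((n:ℤ)+(1:ℕ)) [ZMOD 47] :=
      Int.ModEq.of_dvd h47M (hcong 1)
    have hz0 : (47:ℤ) ∣ (d:ℤ)*((n:ℤ)+(0:ℕ)) := by
      have h1 : (47:ℤ) ∣ (2*(q:ℤ))*((a*((n:ℤ)+(0:ℕ))) % M) := Dvd.dvd.mul_left hc0 _
      have h2 := hm0.dvd
      have hre : (d:ℤ)*((n:ℤ)+(0:ℕ))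
          = ((d:ℤ)*((n:ℤ)+(0:ℕ)) - (2*(q:ℤ))*((a*((n:ℤ)+(0:ℕ))) % M))
            + (2*(q:ℤ))*((a*((n:ℤ)+(0:ℕ))) % M) := by ring
      rw [hre]
      exact dvd_add (by simpa using h2) h1
    have hz1 : (47:ℤ) ∣ (d:ℤ)*((n:ℤ)+(1:ℕ)) := by
      have h1 : (47:ℤ) ∣ (2*(q:ℤ))*((a*((n:ℤ)+(1:ℕ))) % M) := Dvd.dvd.mul_left hc1 _
      have h2 := hm1.dvd
      have hre : (d:ℤ)*((n:ℤ)+(1:ℕ))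
          = ((d:ℤ)*((n:ℤ)+(1:ℕ)) - (2*(q:ℤ))*((a*((n:ℤ)+(1:ℕ))) % M))
            + (2*(q:ℤ))*((a*((n:ℤ)+(1:ℕ))) % M) := by ring
      rw [hre]
      exact dvd_add (by simpa using h2) h1
    have hzd : (47:ℤ) ∣ (d:ℤ) := by
      have hre : (d:ℤ) = (d:ℤ)*((n:ℤ)+(1:ℕ)) - (d:ℤ)*((n:ℤ)+(0:ℕ)) := by push_cast; ring
      rw [hre]
      exact dvd_sub hz1 hz0
    exact h47d (by exact_mod_cast hzd)
  · exact main 0 (by omega) hc0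


lemma normsq {n : ℕ} (x v : EuclideanSpace ℝ (Fin n)) (c : ℝ) :
    ‖x + c • v‖^2 = ‖x‖^2 + 2*c*(inner ℝ x v : ℝ) + c^2*‖v‖^2 := by
  rw [@norm_add_sq_real, real_inner_smul_right, norm_smul]
  rw [mul_pow, Real.norm_eq_abs, sq_abs]
  ring


end Stmt1Aux

open Stmt1Aux

/-- For every positive integer `n` and every real `α > 0` satisfying one of the four
conditions, there is a red/blue coloring of `ℝⁿ` with no red unit 3-progression and
no blue `α`-progression of length 8649. -/
theorem stmt_1 (n : ℕ) (hn : 0 < n) (α : ℝ) (hα : 0 < α)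
    (hcond : Irrational (α ^ 2) ∨
      (∃ p q : ℕ, 0 < p ∧ 0 < q ∧ α ^ 2 = (p : ℝ) / q ∧ ¬ (47 ∣ q)) ∨
      2 ≤ α ^ 2 ∨
      α ^ 2 ≤ 1 / (7 * 47 ^ 4 * 48)) :
    ∃ R : Set (EuclideanSpace ℝ (Fin n)),
      (¬ ∃ (x v : EuclideanSpace ℝ (Fin n)), ‖v‖ = 1 ∧
          x ∈ R ∧ x + v ∈ R ∧ x + (2 : ℝ) • v ∈ R) ∧
      (¬ ∃ (x v : EuclideanSpace ℝ (Fin n)), ‖v‖ = α ∧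
          ∀ i : ℕ, i ≤ 8648 → x + (i : ℝ) • v ∈ Rᶜ) := by
  have hβ : 0 < α^2 := by positivity
  obtain ⟨m, hm0, hf1, hf2, hcase⟩ :
      ∃ m : ℝ, 0 < m ∧ 46/100 ≤ Int.fract (2/m) ∧ Int.fract (2/m) ≤ 54/100 ∧
        ((∃ s : ℕ, ¬ 47 ∣ s ∧ α^2/m = (s:ℝ)/47) ∨
          (23/8648^2 ≤ α^2/m ∧ α^2/m ≤ 49/8648^2)) := by
    rcases hcond with h | ⟨p, q, hp, hq, he, h47⟩ | h | h
    · exact choose_a _ hβ h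
    · exact choose_b _ hβ p q hp hq he h47
    · exact choose_c _ h
    · exact choose_d _ hβ h
  have hmne : m ≠ 0 := ne_of_gt hm0
  refine ⟨{x | Int.fract (‖x‖^2/m) < 23/100}, ?_, ?_⟩
  · rintro ⟨x, v, hv, h1, h2, h3⟩
    simp only [Set.mem_setOf_eq] at h1 h2 h3
    have e2 : ‖x + v‖^2 = ‖x‖^2 + 2*(inner ℝ x v : ℝ) + 1 := by
      have h := normsq x v 1
      rw [one_smul] at h
      rw [h, hv]
      ring
    have e3 : ‖x + (2:ℝ) • v‖^2 = ‖x‖^2 + 4*(inner ℝ x v : ℝ) + 4 := by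
      rw [normsq x v 2, hv]
      ring
    set P : ℝ := ‖x‖^2/m with hP
    set Q : ℝ := ‖x + v‖^2/m with hQ
    set R : ℝ := ‖x + (2:ℝ) • v‖^2/m with hR
    have hcomb : P - 2*Q + R = 2/m := by
      rw [hP, hQ, hR, e2, e3]
      field_simp
      ring
    set K : ℤ := ⌊P⌋ - 2*⌊Q⌋ + ⌊R⌋ with hK
    have hcombf : Int.fract P - 2*Int.fract Q + Int.fract R = 2/m - (K:ℝ) := by
      rw [Int.fract, Int.fract, Int.fract, hK]
      push_cast
      linarith [hcomb]
    have hfrm : Int.fract (2/m) = 2/m - ((⌊2/m⌋ : ℤ):ℝ) := rfl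
    have hQ0 : 0 ≤ Int.fract Q := Int.fract_nonneg Q
    have hP0 : 0 ≤ Int.fract P := Int.fract_nonneg P
    have hR0 : 0 ≤ Int.fract R := Int.fract_nonneg R
    have hzlow : (0:ℝ) < ((K - ⌊2/m⌋ : ℤ):ℝ) := by
      push_cast
      nlinarith [hf1, hcombf, hfrm, h1, h3, hQ0]
    have hzhigh : ((K - ⌊2/m⌋ : ℤ):ℝ) < 1 := by
      push_cast
      nlinarith [hf2, hcombf, hfrm, hP0, hR0, h2]
    have hzl : (0:ℤ) < K - ⌊2/m⌋ := by exact_mod_cast hzlow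
    have hzh : K - ⌊2/m⌋ < 1 := by exact_mod_cast hzhigh
    omega
  · rintro ⟨x, v, hv, hall⟩
    have hβv : ‖v‖^2 = α^2 := by rw [hv]
    have key : ∀ i : ℕ, i ≤ 8648 →
        ¬ Int.fract (‖x‖^2/m + (2*(inner ℝ x v : ℝ)/m)*i + (α^2/m)*i^2) < 23/100 := by
      intro i hi
      have hmem := hall i hi
      simp only [Set.mem_compl_iff, Set.mem_setOf_eq] at hmem
      have hid : ‖x + (i:ℝ) • v‖^2/m
          = ‖x‖^2/m + (2*(inner ℝ x v : ℝ)/m)*i + (α^2/m)*i^2 := by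
        rw [normsq x v (i:ℝ), hβv]
        field_simp
      rw [hid] at hmem
      exact hmem
    rcases hcase with ⟨s, hs47, hsm⟩ | ⟨hb1, hb2⟩
    · obtain ⟨i, hi, hlt⟩ := B1 s hs47 (‖x‖^2/m) (2*(inner ℝ x v : ℝ)/m)
      apply key i hi
      rw [hsm]
      exact hlt
    · obtain ⟨i, hi, hlt⟩ := B2 (α^2/m) (‖x‖^2/m) (2*(inner ℝ x v : ℝ)/m) hb1 hb2
      exact key i hi hlt
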